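/- Let H be a real Hilbert space, b > 0, and let C ⊆ H be a cone (t·v ∈ C whenever v ∈ C and t ≥ 0) that is weakly sequentially closed (if v_k ∈ C for all k and v_k converges weakly to v, then v ∈ C). Let B : H → ℝ satisfy B(t·v) = t²·B(v) for all t ≥ 0 and v ∈ H, and assume B is weakly sequentially continuous (B(v_k) → B(v) whenever v_k converges weakly to v). Define Q : H → ℝ by Q(v) = b·‖v‖² + B(v). Then Q(v) > 0 for every v ∈ C with v ≠ 0 if and only if there exists δ > 0 such that Q(v) ≥ δ·‖v‖² for every v ∈ C. (Equivalence of the coercivity condition (3.37) with its quantitative δ-form, for quadratic forms of the structure possessed by the second derivative of the reduced cost functional.) -/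

import Mathlib

open scoped RealInnerProductSpace
open Filter Topology

/-- **Weak sequential compactness of the closed unit ball** in a real Hilbert space:
every sequence of norm at most `1` has a weakly convergent subsequence. -/
lemma exists_weak_limit_subseq {H : Type*} [NormedAddCommGroup H] [InnerProductSpace ℝ H]
    [CompleteSpace H] (u : ℕ → H) (hu : ∀ k, ‖u k‖ ≤ 1) :
    ∃ (u₀ : H) (φ : ℕ → ℕ), StrictMono φ ∧
      ∀ w : H, Tendsto (fun k => ⟪u (φ k), w⟫) atTop (𝓝 ⟪u₀, w⟫) := by
  classical
  -- The closed linear span of the sequence: a separable closed subspace.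
  set K : Submodule ℝ H := (Submodule.span ℝ (Set.range u)).topologicalClosure with hK
  haveI : CompleteSpace K :=
    (Submodule.isClosed_topologicalClosure _).completeSpace_coe
  have huK : ∀ k, u k ∈ K :=
    fun k => Submodule.le_topologicalClosure _ (Submodule.subset_span ⟨k, rfl⟩)
  have hsep : TopologicalSpace.IsSeparable
      ((Submodule.span ℝ (Set.range u) : Set H)) :=
    (Set.countable_range u).isSeparable.span
  obtain ⟨c, hc_count, hc_sub⟩ := hsep.closure
  -- enumerate a countable dense subset of `K`
  obtain ⟨e, he⟩ := (hc_count.insert (0 : H)).exists_eq_range (Set.insert_nonempty _ _)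
  have hKdense : (K : Set H) ⊆ closure (Set.range e) := by
    rw [← he]
    intro x hx
    have : x ∈ closure (Submodule.span ℝ (Set.range u) : Set H) := hx
    exact closure_mono (Set.subset_insert _ _) (hc_sub this)
  -- diagonal extraction via compactness of a product of intervals
  have hF : ∀ k, (fun n => ⟪u k, e n⟫) ∈
      Set.pi Set.univ (fun n => Set.Icc (-‖e n‖) ‖e n‖) := by
    intro k n _
    have h1 := abs_real_inner_le_norm (u k) (e n)
    have h2 : |⟪u k, e n⟫| ≤ ‖e n‖ := by
      refine h1.trans ?_
      have := norm_nonneg (e n)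
      nlinarith [hu k]
    exact ⟨neg_le_of_abs_le h2, le_of_abs_le h2⟩
  have hcomp : IsCompact (Set.pi Set.univ fun n => Set.Icc (-‖e n‖) (‖e n‖)) :=
    isCompact_univ_pi fun n => isCompact_Icc
  obtain ⟨a, -, φ, hφ, hconv⟩ := hcomp.tendsto_subseq hF
  have hconv' : ∀ n, Tendsto (fun k => ⟪u (φ k), e n⟫) atTop (𝓝 (a n)) := by
    intro n
    exact (tendsto_pi_nhds.mp hconv) n
  -- for every `w`, the sequence `⟪u (φ k), w⟫` converges
  have key : ∀ w : H, ∃ L : ℝ, Tendsto (fun k => ⟪u (φ k), w⟫) atTop (𝓝 L) := by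
    intro w
    set x : H := (K.orthogonalProjectionOnto w : H) with hxdef
    have hx : ∀ v ∈ K, ⟪v, w⟫ = ⟪v, x⟫ := by
      intro v hv
      have h0 : ⟪w - x, v⟫ = 0 := K.starProjection_inner_eq_zero w v hv
      have : ⟪v, w - x⟫ = 0 := by rwa [real_inner_comm]
      rw [inner_sub_right] at this
      linarith
    have hxK : x ∈ closure (Set.range e) := hKdense (K.orthogonalProjectionOnto w).2
    have hcauchy : CauchySeq (fun k => ⟪u (φ k), w⟫) := by
      rw [Metric.cauchySeq_iff]
      intro ε hε
      obtain ⟨y, hy, hdy⟩ := Metric.mem_closure_iff.mp hxK (ε / 6) (by linarith)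
      obtain ⟨n, rfl⟩ := hy
      have hc : CauchySeq (fun k => ⟪u (φ k), e n⟫) := (hconv' n).cauchySeq
      obtain ⟨N, hN⟩ := Metric.cauchySeq_iff.mp hc (ε / 2) (by linarith)
      refine ⟨N, fun k hk l hl => ?_⟩
      have hxen : ‖x - e n‖ < ε / 6 := by
        rw [dist_eq_norm] at hdy; exact hdy
      have bound : ∀ m, |⟪u (φ m), x - e n⟫| ≤ ‖x - e n‖ := by
        intro m
        refine (abs_real_inner_le_norm _ _).trans ?_
        have := norm_nonneg (x - e n)
        nlinarith [hu (φ m)]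
      have hkl := hN k hk l hl
      rw [Real.dist_eq] at hkl ⊢
      have e1 : ⟪u (φ k), w⟫ = ⟪u (φ k), x⟫ := hx _ (huK _)
      have e2 : ⟪u (φ l), w⟫ = ⟪u (φ l), x⟫ := hx _ (huK _)
      have d1 : ⟪u (φ k), x⟫ - ⟪u (φ k), e n⟫ = ⟪u (φ k), x - e n⟫ := by
        rw [inner_sub_right]
      have d2 : ⟪u (φ l), x⟫ - ⟪u (φ l), e n⟫ = ⟪u (φ l), x - e n⟫ := by
        rw [inner_sub_right]
      have b1 := bound k
      have b2 := bound l
      rw [e1, e2]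
      have habs : |(⟪u (φ k), x⟫ - ⟪u (φ l), x⟫)| ≤
          |⟪u (φ k), x - e n⟫| + |⟪u (φ k), e n⟫ - ⟪u (φ l), e n⟫| + |⟪u (φ l), x - e n⟫| := by
        have : ⟪u (φ k), x⟫ - ⟪u (φ l), x⟫ =
            ⟪u (φ k), x - e n⟫ + (⟪u (φ k), e n⟫ - ⟪u (φ l), e n⟫) + -(⟪u (φ l), x - e n⟫) := by
          rw [← d1, ← d2]; ring
        rw [this]
        calc _ ≤ |⟪u (φ k), x - e n⟫ + (⟪u (φ k), e n⟫ - ⟪u (φ l), e n⟫)| +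
              |(-(⟪u (φ l), x - e n⟫))| := abs_add_le _ _
          _ ≤ _ := by
              rw [abs_neg]
              exact add_le_add (abs_add_le _ _) le_rfl
      calc |(⟪u (φ k), x⟫ - ⟪u (φ l), x⟫)| ≤ _ := habs
        _ < ε / 6 + ε / 2 + ε / 6 := by
            exact add_lt_add (add_lt_add (b1.trans_lt hxen) hkl) (b2.trans_lt hxen)
        _ < ε := by linarith
    exact cauchySeq_tendsto_of_complete hcauchy
  choose L hL using key
  -- the limit functional is linear and bounded
  have hLadd : ∀ w w', L (w + w') = L w + L w' := by
    intro w w'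
    refine tendsto_nhds_unique (hL (w + w')) ?_
    have := (hL w).add (hL w')
    simpa [inner_add_right] using this
  have hLsmul : ∀ (t : ℝ) w, L (t • w) = t * L w := by
    intro t w
    refine tendsto_nhds_unique (hL (t • w)) ?_
    have := (hL w).const_mul t
    simpa [inner_smul_right] using this
  have hLbound : ∀ w, |L w| ≤ 1 * ‖w‖ := by
    intro w
    rw [one_mul]
    have h1 : Tendsto (fun k => |⟪u (φ k), w⟫|) atTop (𝓝 |L w|) := (hL w).abs
    refine le_of_tendsto h1 (Eventually.of_forall fun k => ?_)
    refine (abs_real_inner_le_norm _ _).trans ?_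
    have := norm_nonneg w
    nlinarith [hu (φ k)]
  let T : H →L[ℝ] ℝ :=
    LinearMap.mkContinuous
      { toFun := L, map_add' := hLadd, map_smul' := hLsmul } 1
      (fun w => by simpa using hLbound w)
  refine ⟨(InnerProductSpace.toDual ℝ H).symm T, φ, hφ, fun w => ?_⟩
  have : ⟪(InnerProductSpace.toDual ℝ H).symm T, w⟫ = T w := by
    rw [← InnerProductSpace.toDual_apply_apply]
    simp
  rw [this]
  exact hL w

/-- Equivalence of the coercivity condition (3.37) with its quantitative `δ`-form:
for `Q v = b ‖v‖² + B v` with `b > 0`, `B` positively homogeneous of degree two and weakly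
sequentially continuous, and `C` a weakly sequentially closed cone in a real Hilbert space,
`Q > 0` on `C \ {0}` if and only if `Q v ≥ δ ‖v‖²` on `C` for some `δ > 0`. -/
theorem coercivity_iff_quantitative
    {H : Type*} [NormedAddCommGroup H] [InnerProductSpace ℝ H] [CompleteSpace H]
    (b : ℝ) (hb : 0 < b) (C : Set H)
    (hcone : ∀ v ∈ C, ∀ t : ℝ, 0 ≤ t → t • v ∈ C)
    (hclosed : ∀ (v : ℕ → H) (v₀ : H), (∀ k, v k ∈ C) →
      (∀ w : H, Filter.Tendsto (fun k => ⟪v k, w⟫) Filter.atTop (nhds ⟪v₀, w⟫)) →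
      v₀ ∈ C)
    (B : H → ℝ)
    (hquad : ∀ t : ℝ, 0 ≤ t → ∀ v : H, B (t • v) = t ^ 2 * B v)
    (hwc : ∀ (v : ℕ → H) (v₀ : H),
      (∀ w : H, Filter.Tendsto (fun k => ⟪v k, w⟫) Filter.atTop (nhds ⟪v₀, w⟫)) →
      Filter.Tendsto (fun k => B (v k)) Filter.atTop (nhds (B v₀))) :
    (∀ v ∈ C, v ≠ 0 → 0 < b * ‖v‖ ^ 2 + B v) ↔
    ∃ δ > 0, ∀ v ∈ C, δ * ‖v‖ ^ 2 ≤ b * ‖v‖ ^ 2 + B v := by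
  have hB0 : B 0 = 0 := by
    have := hquad 0 le_rfl 0
    simpa using this
  constructor
  · intro h
    by_contra hn
    push_neg at hn
    have hsel : ∀ k : ℕ, ∃ v ∈ C, b * ‖v‖ ^ 2 + B v < ((k : ℝ) + 1)⁻¹ * ‖v‖ ^ 2 := by
      intro k
      obtain ⟨v, hvC, hv⟩ := hn (((k : ℝ) + 1)⁻¹)
        (by positivity)
      exact ⟨v, hvC, hv⟩
    choose v hvC hv using hsel
    have hvne : ∀ k, v k ≠ 0 := by
      intro k hk
      have := hv k
      rw [hk] at this
      simp [hB0] at this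
    have hvpos : ∀ k, (0 : ℝ) < ‖v k‖ := fun k => norm_pos_iff.mpr (hvne k)
    set u : ℕ → H := fun k => ‖v k‖⁻¹ • v k with hudef
    have hunorm : ∀ k, ‖u k‖ = 1 := by
      intro k
      rw [hudef]
      simp only [norm_smul, norm_inv, norm_norm]
      exact inv_mul_cancel₀ (hvpos k).ne'
    have huC : ∀ k, u k ∈ C := fun k =>
      hcone (v k) (hvC k) _ (inv_nonneg.mpr (hvpos k).le)
    have hBu : ∀ k, B (u k) = (‖v k‖⁻¹) ^ 2 * B (v k) := fun k =>
      hquad _ (inv_nonneg.mpr (hvpos k).le) (v k)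
    have hub : ∀ k : ℕ, b + B (u k) < ((k : ℝ) + 1)⁻¹ := by
      intro k
      have h1 := hv k
      have h2 : (0 : ℝ) < ‖v k‖ ^ 2 := pow_pos (hvpos k) 2
      have : b + B (u k) = (b * ‖v k‖ ^ 2 + B (v k)) / ‖v k‖ ^ 2 := by
        rw [hBu k]
        field_simp
        rw [add_div, mul_div_cancel_right₀ _ h2.ne']
      rw [this]
      rw [div_lt_iff₀ h2]
      calc b * ‖v k‖ ^ 2 + B (v k) < ((k : ℝ) + 1)⁻¹ * ‖v k‖ ^ 2 := h1
        _ = _ := rfl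
    obtain ⟨u₀, φ, hφ, hweak⟩ := exists_weak_limit_subseq u (fun k => (hunorm k).le)
    have hu₀C : u₀ ∈ C := hclosed (fun k => u (φ k)) u₀ (fun k => huC _) hweak
    have hBlim : Tendsto (fun k => B (u (φ k))) atTop (𝓝 (B u₀)) :=
      hwc (fun k => u (φ k)) u₀ hweak
    -- b + B u₀ ≤ 0
    have hzero : Tendsto (fun k : ℕ => ((k : ℝ) + 1)⁻¹) atTop (𝓝 0) :=
      tendsto_one_div_add_atTop_nhds_zero_nat.congr (by intro k; rw [one_div])
    have hle : b + B u₀ ≤ 0 := by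
      have h1 : Tendsto (fun k => b + B (u (φ k))) atTop (𝓝 (b + B u₀)) :=
        hBlim.const_add b
      refine le_of_tendsto_of_tendsto' h1 hzero (fun k => ?_)
      calc b + B (u (φ k)) ≤ ((φ k : ℝ) + 1)⁻¹ := (hub (φ k)).le
        _ ≤ ((k : ℝ) + 1)⁻¹ := by
            have hk : (k : ℝ) ≤ (φ k : ℝ) := Nat.cast_le.mpr hφ.le_apply
            apply inv_anti₀ (by positivity)
            linarith
    -- ‖u₀‖ ≤ 1
    have hnorm₀ : ‖u₀‖ ≤ 1 := by
      have ht := hweak u₀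
      have hbound : ∀ k, ⟪u (φ k), u₀⟫ ≤ ‖u₀‖ := by
        intro k
        have := real_inner_le_norm (u (φ k)) u₀
        rw [hunorm (φ k)] at this
        simpa using this
      have h2 : ⟪u₀, u₀⟫ ≤ ‖u₀‖ := le_of_tendsto ht (Eventually.of_forall hbound)
      rw [real_inner_self_eq_norm_sq] at h2
      nlinarith [norm_nonneg u₀]
    have hu₀ne : u₀ ≠ 0 := by
      intro h0
      rw [h0, hB0] at hle
      linarith
    have hQpos := h u₀ hu₀C hu₀ne
    have hsq : ‖u₀‖ ^ 2 ≤ 1 := by nlinarith [norm_nonneg u₀]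
    have := mul_le_mul_of_nonneg_left hsq hb.le
    linarith
  · rintro ⟨δ, hδ, hQ⟩ v hvC hvne
    have h1 := hQ v hvC
    have h2 : (0:ℝ) < ‖v‖ ^ 2 := pow_pos (norm_pos_iff.mpr hvne) 2
    calc (0:ℝ) < δ * ‖v‖ ^ 2 := mul_pos hδ h2
      _ ≤ _ := h1
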